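/- For a Gaussian mixture posterior map: fix J ≥ 2, strictly positive proportions p_ℓ and Gaussian densities φ(·|μ_ℓ, σ_ℓ²) for ℓ ≠ ν. If two parameter values (p_ν, μ_ν, σ_ν²) and (p_ν', μ_ν', σ_ν'²) (with p_ν, p_ν' > 0, σ_ν², σ_ν'² > 0) give rise to the same function y ↦ p_ν φ(y|μ_ν, σ_ν²) / (p_ν φ(y|μ_ν,σ_ν²) + Σ_{ℓ≠ν} p_ℓ φ(y|μ_ℓ,σ_ℓ²)) on ℝ, then p_ν = p_ν', μ_ν = μ_ν', and σ_ν² = σ_ν'². -/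
import Mathlib


open Finset Real

noncomputable def gaussDens (μ s y : ℝ) : ℝ :=
  (Real.sqrt (2 * Real.pi * s))⁻¹ * Real.exp (-(y - μ) ^ 2 / (2 * s))

lemma gaussDens_pos (μ s y : ℝ) (hs : 0 < s) : 0 < gaussDens μ s y := by
  unfold gaussDens
  have h : 0 < Real.sqrt (2 * Real.pi * s) := by
    apply Real.sqrt_pos.mpr
    positivity
  positivity

lemma log_pmul (pν μν sν y : ℝ) (hpν : 0 < pν) (hsν : 0 < sν) :
    Real.log (pν * gaussDens μν sν y)
      = Real.log pν - Real.log (Real.sqrt (2 * Real.pi * sν)) + -(y - μν) ^ 2 / (2 * sν) := by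
  have hsq : 0 < Real.sqrt (2 * Real.pi * sν) := Real.sqrt_pos.mpr (by positivity)
  unfold gaussDens
  rw [Real.log_mul hpν.ne' (by positivity), Real.log_mul (by positivity) (Real.exp_ne_zero _),
    Real.log_inv, Real.log_exp]
  ring

theorem stmt_18 (m : ℕ) (hm : 1 ≤ m)
    (p : Fin m → ℝ) (μ : Fin m → ℝ) (s : Fin m → ℝ)
    (hp : ∀ ℓ, 0 < p ℓ) (hs : ∀ ℓ, 0 < s ℓ)
    (pν pν' μν μν' sν sν' : ℝ)
    (hpν : 0 < pν) (hpν' : 0 < pν') (hsν : 0 < sν) (hsν' : 0 < sν')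
    (heq : ∀ y : ℝ,
      pν * gaussDens μν sν y /
        (pν * gaussDens μν sν y + ∑ ℓ : Fin m, p ℓ * gaussDens (μ ℓ) (s ℓ) y)
      = pν' * gaussDens μν' sν' y /
        (pν' * gaussDens μν' sν' y + ∑ ℓ : Fin m, p ℓ * gaussDens (μ ℓ) (s ℓ) y)) :
    pν = pν' ∧ μν = μν' ∧ sν = sν' := by
  haveI : NeZero m := ⟨by omega⟩
  -- the background sum is positive
  have hS : ∀ y : ℝ, 0 < ∑ ℓ : Fin m, p ℓ * gaussDens (μ ℓ) (s ℓ) y := by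
    intro y
    apply Finset.sum_pos
    · intro ℓ _
      exact mul_pos (hp ℓ) (gaussDens_pos _ _ _ (hs ℓ))
    · exact Finset.univ_nonempty
  -- pointwise equality of the weighted densities
  have hdens : ∀ y : ℝ, pν * gaussDens μν sν y = pν' * gaussDens μν' sν' y := by
    intro y
    have h := heq y
    set a := pν * gaussDens μν sν y with ha
    set a' := pν' * gaussDens μν' sν' y with ha'
    set S := ∑ ℓ : Fin m, p ℓ * gaussDens (μ ℓ) (s ℓ) y with hSdef
    have haP : 0 < a := mul_pos hpν (gaussDens_pos _ _ _ hsν)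
    have haP' : 0 < a' := mul_pos hpν' (gaussDens_pos _ _ _ hsν')
    have hSP : 0 < S := hS y
    rw [div_eq_div_iff (by positivity) (by positivity)] at h
    have : a * S = a' * S := by nlinarith [h]
    exact mul_right_cancel₀ hSP.ne' this
  -- take logarithms
  have hlog : ∀ y : ℝ,
      Real.log pν - Real.log (Real.sqrt (2 * Real.pi * sν)) + -(y - μν) ^ 2 / (2 * sν)
      = Real.log pν' - Real.log (Real.sqrt (2 * Real.pi * sν')) + -(y - μν') ^ 2 / (2 * sν') := by
    intro y
    rw [← log_pmul _ _ _ _ hpν hsν, ← log_pmul _ _ _ _ hpν' hsν', hdens y]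
  have h0 := hlog 0
  have h1 := hlog 1
  have h2 := hlog (-1)
  have hsne : sν ≠ 0 := hsν.ne'
  have hsne' : sν' ≠ 0 := hsν'.ne'
  have hinv : sν⁻¹ = sν'⁻¹ := by
    field_simp at h0 h1 h2 ⊢
    nlinarith [h0, h1, h2]
  have hss : sν = sν' := by
    have := congrArg (·⁻¹) hinv
    simpa using this
  subst hss
  have hmu : μν = μν' := by
    field_simp at h1 h2
    nlinarith [h1, h2]
  subst hmu
  have hp0 : Real.log pν = Real.log pν' := by linarith [h0]
  have : pν = pν' := by
    have := congrArg Real.exp hp0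
    rwa [Real.exp_log hpν, Real.exp_log hpν'] at this
  exact ⟨this, rfl, rfl⟩
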